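/- Let C be a small finitely complete category and I an idempotent ideal of the presheaf category with I(C) nonempty for all C. Then j^I ≤ ¬¬, i.e., for every object C and every sieve S on C, j^I_C(S) ⊆ ¬¬_C(S). -/
import Mathlib


open CategoryTheory Opposite CategoryTheory.GrothendieckTopology

universe v u

variable {C : Type u} [Category.{v} C]

/-- An ideal of the presheaf category on `C`: a family of sieves `I(X)` such that
`f ∘ g ∈ I(D)` whenever `f : X ⟶ D` and `g ∈ I(X)`. -/
structure CIdeal (C : Type u) [Category.{v} C] where
  sieve : ∀ X : C, Sieve X
  comp : ∀ ⦃X D : C⦄ (f : X ⟶ D) ⦃Y : C⦄ (g : Y ⟶ X), sieve X g → sieve D (g ≫ f)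

/-- `I²(X) = { f ∘ g | f ∈ I(X), g ∈ I(dom f) }`. -/
def CIdeal.sq (I : CIdeal C) (X : C) : ∀ ⦃Y : C⦄, (Y ⟶ X) → Prop :=
  fun _Y h => ∃ (Z : C) (f : Z ⟶ X) (g : _Y ⟶ Z), I.sieve X f ∧ I.sieve Z g ∧ h = g ≫ f

/-- The `I`-closure of a family of subsets of the values of a presheaf `F`. -/
def CIdeal.cl (I : CIdeal C) (F : Cᵒᵖ ⥤ Type v)
    (G : ∀ X : C, Set (F.obj (op X))) (X : C) : Set (F.obj (op X)) :=
  {x | ∀ ⦃Y : C⦄ (f : Y ⟶ X), I.sieve X f → F.map f.op x ∈ G Y}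

/-- The weak ideal topology: `jᴵ(S) = { f | ∀ g ∈ I(dom f), f ∘ g ∈ S }`. -/
def CIdeal.jI (I : CIdeal C) {X : C} (S : Sieve X) : Sieve X where
  arrows := fun _Y f => ∀ ⦃Z : C⦄ (g : Z ⟶ _Y), I.sieve _Y g → S (g ≫ f)
  downward_closed := by
    intro Y Z f hf g W k hk
    have := hf (k ≫ g) (I.comp g k hk)
    simpa [Category.assoc] using this

/-- for a finitely complete small category `C` and an idempotent ideal
`I` with all `I(X)` nonempty, `jᴵ ≤ ¬¬`: every arrow in `jᴵ(S)` lies in `¬¬(S)`. -/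
theorem jI_le_negneg [Limits.HasFiniteLimits C] (I : CIdeal C)
    (hidem : ∀ (X : C) ⦃Y : C⦄ (h : Y ⟶ X), I.sq X h ↔ I.sieve X h)
    (hne : ∀ X : C, ∃ (Y : C) (g : Y ⟶ X), I.sieve X g)
    (X : C) (S : Sieve X) ⦃Y : C⦄ (f : Y ⟶ X) (hf : I.jI S f) :
    ∀ ⦃Z : C⦄ (g : Z ⟶ Y), ∃ (W : C) (h : W ⟶ Z), S (h ≫ g ≫ f) := by
  intro Z g
  obtain ⟨W, k, hk⟩ := hne Z
  exact ⟨W, k, by simpa [Category.assoc] using hf (k ≫ g) (I.comp g k hk)⟩
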